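/- The linear map ε_a : kF_X^a → k sending the single-vertex tree • to 1 and every other angularly decorated rooted forest to 0 is a counit for the angular coproduct: (ε_a ⊗ id) ∘ Δ_a = id = (id ⊗ ε_a) ∘ Δ_a under the canonical identifications k ⊗ kF_X^a ≅ kF_X^a ≅ kF_X^a ⊗ k. -/

import Mathlib

set_option linter.unreachableTactic false
set_option linter.unnecessarySeqFocus false
set_option linter.unusedTactic false

/-! Angularly decorated planar rooted trees and forests over a decoration set `X`.
A tree is either the single-vertex tree `•` (leaf) or the grafting `B⁺(F)` of a forest;
a forest is an alternating word `T₁ x₁ T₂ x₂ ⋯ x_{ℓ-1} T_ℓ` of trees and decorations. -/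
mutual
  inductive ATree (X : Type) : Type
    | leaf : ATree X
    | graft : AForest X → ATree X
  inductive AForest (X : Type) : Type
    | single : ATree X → AForest X
    | cons : ATree X → X → AForest X → AForest X
end

mutual
  /-- Depth of an angularly decorated tree. -/
  def ATree.depth {X : Type} : ATree X → ℕ
    | .leaf => 0
    | .graft F => AForest.depth F + 1
  /-- Depth of an angularly decorated forest. -/
  def AForest.depth {X : Type} : AForest X → ℕ
    | .single T => ATree.depth T
    | .cons T _ F => max (ATree.depth T) (AForest.depth F)
end

mutual
  /-- An auxiliary size of an angularly decorated tree. -/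
  def ATree.size {X : Type} : ATree X → ℕ
    | .leaf => 1
    | .graft F => AForest.size F + 1
  /-- An auxiliary size of an angularly decorated forest. -/
  def AForest.size {X : Type} : AForest X → ℕ
    | .single T => ATree.size T + 1
    | .cons T _ F => ATree.size T + AForest.size F + 1
end

mutual
  /-- The number of vertices of an angularly decorated tree. -/
  def ATree.deg {X : Type} : ATree X → ℕ
    | .leaf => 1
    | .graft F => AForest.deg F + 1
  /-- The number of vertices of an angularly decorated forest. -/
  def AForest.deg {X : Type} : AForest X → ℕ
    | .single T => ATree.deg T
    | .cons T _ F => ATree.deg T + AForest.deg F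
end

/-- Auxiliary lemma for termination proofs. -/
theorem natlex_of_le_of_lt {a₁ a₂ b₁ b₂ : ℕ} (h1 : a₁ ≤ a₂) (h2 : b₁ < b₂) :
    Prod.Lex (fun x y : ℕ => x < y) (fun x y : ℕ => x < y) (a₁, b₁) (a₂, b₂) := by
  rcases lt_or_eq_of_le h1 with h | rfl
  · exact Prod.Lex.left _ _ h
  · exact Prod.Lex.right _ h2

/-- `RBF k X` is the free `k`-module on the set of angularly decorated rooted forests. -/
abbrev RBF (k X : Type) [CommRing k] := AForest X →₀ k

mutual
  /-- The product `⋄ₐ` on basis trees (with values in the free module on trees). -/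
  noncomputable def mulT {k X : Type} [CommRing k] (lam : k) :
      ATree X → ATree X → (ATree X →₀ k)
    | .leaf, T' => Finsupp.single T' 1
    | T, .leaf => Finsupp.single T 1
    | .graft F, .graft F' =>
        Finsupp.mapDomain ATree.graft (mulF lam (.single (.graft F)) F')
          + Finsupp.mapDomain ATree.graft (mulF lam F (.single (.graft F')))
          + lam • Finsupp.mapDomain ATree.graft (mulF lam F F')
  termination_by T T' => (ATree.depth T + ATree.depth T', ATree.size T + ATree.size T')
  decreasing_by
    all_goals
      first
        | (apply Prod.Lex.left
           simp [ATree.depth, AForest.depth] <;> omega)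
        | (apply natlex_of_le_of_lt <;>
            simp [ATree.depth, AForest.depth, ATree.size, AForest.size] <;>
            omega)
  /-- The product `⋄ₐ` on basis forests. -/
  noncomputable def mulF {k X : Type} [CommRing k] (lam : k) :
      AForest X → AForest X → RBF k X
    | .single T, .single T' => Finsupp.mapDomain AForest.single (mulT lam T T')
    | .single T, .cons T' y G' =>
        Finsupp.mapDomain (fun t => AForest.cons t y G') (mulT lam T T')
    | .cons T x G, F' => Finsupp.mapDomain (fun g => AForest.cons T x g) (mulF lam G F')
  termination_by F F' => (AForest.depth F + AForest.depth F', AForest.size F + AForest.size F')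
  decreasing_by
    all_goals
      first
        | (apply Prod.Lex.left
           simp [ATree.depth, AForest.depth] <;> omega)
        | (apply natlex_of_le_of_lt <;>
            simp [ATree.depth, AForest.depth, ATree.size, AForest.size] <;>
            omega)
end

open scoped TensorProduct

variable {k X : Type} [CommRing k]

/-- The unit `•` of the Rota-Baxter algebra `kF_X^a`: the single-vertex tree. -/
noncomputable def RBF.one : RBF k X := Finsupp.single (AForest.single ATree.leaf) 1

/-- The canonical basis inclusion of forests into `kF_X^a`. -/
noncomputable def RBF.of (F : AForest X) : RBF k X := Finsupp.single F 1

/-- The natural map `i_X : X → kF_X^a`, `x ↦ • x •`. -/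
noncomputable def RBF.iX (x : X) : RBF k X :=
  RBF.of (AForest.cons ATree.leaf x (AForest.single ATree.leaf))

/-- The grafting operator `B⁺` as a `k`-linear operator on `kF_X^a`. -/
noncomputable def RBF.Bplus : RBF k X →ₗ[k] RBF k X :=
  Finsupp.lmapDomain k k (fun F => AForest.single (ATree.graft F))

/-- The multiplication `⋄ₐ` on `kF_X^a` as a `k`-bilinear map. -/
noncomputable def RBF.mul (lam : k) : RBF k X →ₗ[k] RBF k X →ₗ[k] RBF k X :=
  Finsupp.lift _ k _ fun F => Finsupp.lift _ k _ fun F' => mulF lam F F'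

/-- Concatenation of two forests with the angle between them decorated by `x`. -/
def concatA (x : X) : AForest X → AForest X → AForest X
  | .single T, F' => .cons T x F'
  | .cons T y G, F' => .cons T y (concatA x G F')

/-- Concatenation with middle angle decorated by `x`, as a bilinear map on `kF_X^a`. -/
noncomputable def RBF.concat (x : X) : RBF k X →ₗ[k] RBF k X →ₗ[k] RBF k X :=
  Finsupp.lift _ k _ fun F => Finsupp.lift _ k _ fun F' => RBF.of (concatA x F F')

/-- Given two bilinear maps `f g` on a module `M`, the bilinear map on `M ⊗ M` sending
`(a ⊗ b, c ⊗ d)` to `f a c ⊗ g b d`. -/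
noncomputable def mixMap {M : Type} [AddCommGroup M] [Module k M]
    (f g : M →ₗ[k] M →ₗ[k] M) :
    (M ⊗[k] M) →ₗ[k] (M ⊗[k] M) →ₗ[k] (M ⊗[k] M) :=
  TensorProduct.curry
    ((TensorProduct.map (TensorProduct.lift f) (TensorProduct.lift g)).comp
      (TensorProduct.tensorTensorTensorComm k M M M M).toLinearMap)

mutual
  /-- The angular coproduct of a basis tree: the sum of `cl(H) ⊗ T/H` over all
  subforests `H ⊑ T` (sequences of mutually disjoint full subtrees and bare angular
  decorations in planar order). -/
  noncomputable def coT (lam : k) : ATree X → RBF k X ⊗[k] RBF k X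
    | .leaf => RBF.one ⊗ₜ[k] RBF.one
    | .graft F => (RBF.of (AForest.single (ATree.graft F))) ⊗ₜ[k] RBF.one
        + (LinearMap.lTensor (RBF k X) RBF.Bplus) (coF lam F)
  /-- The angular coproduct of a basis forest: the sum of `cl(H) ⊗ F/H` over all
  subforests `H ⊑ F`. -/
  noncomputable def coF (lam : k) : AForest X → RBF k X ⊗[k] RBF k X
    | .single T => coT lam T
    | .cons T x G =>
        mixMap (RBF.concat x) (RBF.mul lam) (coT lam T) (coF lam G)
          + mixMap (RBF.mul lam) (RBF.concat x) (coT lam T) (coF lam G)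
end

/-- The angular coproduct `Δₐ : kF_X^a → kF_X^a ⊗ kF_X^a`,
`Δₐ(F) = Σ_{H ⊑ F} cl(H) ⊗ F/H`. -/
noncomputable def RBF.Delta (lam : k) : RBF k X →ₗ[k] RBF k X ⊗[k] RBF k X :=
  Finsupp.lift _ k _ fun F => coF lam F

/-- The counit `εₐ : kF_X^a → k` sending the single-vertex tree `•` to `1` and every
other forest to `0`. -/
noncomputable def RBF.eps : RBF k X →ₗ[k] k :=
  Finsupp.lift _ k _ fun F =>
    match F with
    | .single .leaf => (1 : k)
    | _ => 0

/-- The unit map `u : k → kF_X^a`, `c ↦ c •`. -/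
noncomputable def RBF.unit : k →ₗ[k] RBF k X :=
  LinearMap.toSpanSingleton k (RBF k X) RBF.one

/-! ### Auxiliary lemmas for the counit theorem -/

section Aux

open TensorProduct LinearMap

/-- The weight function underlying `εₐ`. -/
def epsW {k X : Type} [CommRing k] : AForest X → k := fun F =>
  match F with
  | .single .leaf => (1 : k)
  | _ => 0

lemma eps_single (F : AForest X) (c : k) :
    RBF.eps (Finsupp.single F c) = c * epsW F := by
  simp [RBF.eps, Finsupp.lift_apply, Finsupp.sum_single_index, epsW, smul_eq_mul]

lemma eps_of (F : AForest X) : RBF.eps (RBF.of F : RBF k X) = epsW F := by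
  simp [RBF.of, eps_single]

lemma eps_one : RBF.eps (RBF.one : RBF k X) = 1 := by
  simp [RBF.one, eps_single, epsW]

/-- `εₐ` kills any `mapDomain` image whose target forests all have weight `0`. -/
lemma eps_mapDomain {α : Type} (g : α → AForest X) (h : ∀ a, epsW (k := k) (g a) = 0)
    (m : α →₀ k) : RBF.eps (Finsupp.mapDomain g m) = 0 := by
  rw [Finsupp.mapDomain, map_finsuppSum]
  refine Finset.sum_eq_zero fun a _ => ?_
  simp [eps_single, h]

/-- The analogue of `εₐ` on the free module on trees. -/
noncomputable def epsT {k X : Type} [CommRing k] : (ATree X →₀ k) →ₗ[k] k :=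
  Finsupp.lift _ k _ fun T =>
    match T with
    | .leaf => (1 : k)
    | _ => 0

def epsWT {k X : Type} [CommRing k] : ATree X → k := fun T =>
  match T with
  | .leaf => (1 : k)
  | _ => 0

lemma epsT_single (T : ATree X) (c : k) :
    epsT (Finsupp.single T c) = c * epsWT T := by
  simp [epsT, Finsupp.lift_apply, Finsupp.sum_single_index, epsWT, smul_eq_mul]

lemma epsT_mapDomain {α : Type} (g : α → ATree X) (h : ∀ a, epsWT (k := k) (g a) = 0)
    (m : α →₀ k) : epsT (Finsupp.mapDomain g m) = 0 := by
  rw [Finsupp.mapDomain, map_finsuppSum]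
  refine Finset.sum_eq_zero fun a _ => ?_
  simp [epsT_single, h]

lemma eps_mapDomain_single (m : ATree X →₀ k) :
    RBF.eps (Finsupp.mapDomain AForest.single m) = epsT m := by
  rw [Finsupp.mapDomain, map_finsuppSum]
  rw [show epsT m = m.sum (fun a c => epsT (Finsupp.single a c)) by
    rw [← map_finsuppSum]; simp]
  refine Finset.sum_congr rfl fun a _ => ?_
  cases a <;> simp [eps_single, epsT_single, epsW, epsWT]

/-- `εₐ` is multiplicative on the products of basis trees. -/
lemma epsT_mulT (lam : k) (T T' : ATree X) :
    epsT (mulT lam T T') = epsWT T * epsWT T' := by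
  cases T with
  | leaf => cases T' <;> simp [mulT, epsT_single, epsWT]
  | graft F =>
    cases T' with
    | leaf => simp [mulT, epsT_single, epsWT]
    | graft F' =>
      rw [mulT]
      simp only [map_add, map_smul]
      simp only [epsT_mapDomain ATree.graft (fun a => rfl)]
      simp [epsWT]

/-- `εₐ` is multiplicative on the products of basis forests. -/
lemma eps_mulF (lam : k) (F F' : AForest X) :
    RBF.eps (mulF lam F F') = epsW F * epsW F' := by
  cases F with
  | single T =>
    cases F' with
    | single T' =>
      rw [mulF, eps_mapDomain_single, epsT_mulT]
      cases T <;> cases T' <;> simp [epsW, epsWT]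
    | cons T' y G' =>
      rw [mulF, eps_mapDomain (fun t => AForest.cons t y G') (fun a => rfl)]
      simp [epsW]
  | cons T x G =>
    rw [mulF, eps_mapDomain (fun g => AForest.cons T x g) (fun a => rfl)]
    simp [epsW]

lemma eps_mul (lam : k) (a b : RBF k X) :
    RBF.eps (RBF.mul lam a b) = RBF.eps a * RBF.eps b := by
  induction a using Finsupp.induction_linear with
  | zero => simp
  | add f g hf hg => simp [map_add, hf, hg, add_mul]
  | single F c =>
    induction b using Finsupp.induction_linear with
    | zero => simp
    | add f g hf hg => simp [map_add, hf, hg, mul_add]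
    | single F' c' =>
      simp only [RBF.mul, Finsupp.lift_apply, Finsupp.sum_single_index,
        LinearMap.zero_apply, zero_smul, map_smul, LinearMap.smul_apply]
      rw [eps_mulF]
      simp [eps_single, smul_eq_mul]
      ring

lemma eps_concat (x : X) (a b : RBF k X) :
    RBF.eps (RBF.concat x a b) = 0 := by
  induction a using Finsupp.induction_linear with
  | zero => simp
  | add f g hf hg => simp [map_add, hf, hg]
  | single F c =>
    induction b using Finsupp.induction_linear with
    | zero => simp
    | add f g hf hg => simp [map_add, hf, hg]
    | single F' c' =>
      simp only [RBF.concat, Finsupp.lift_apply, Finsupp.sum_single_index,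
        LinearMap.zero_apply, zero_smul, map_smul, LinearMap.smul_apply]
      cases F <;> simp [concatA, eps_of, epsW]

lemma eps_Bplus (a : RBF k X) : RBF.eps (RBF.Bplus a) = 0 := by
  rw [RBF.Bplus, Finsupp.lmapDomain_apply]
  exact eps_mapDomain (fun F => AForest.single (ATree.graft F)) (fun F => rfl) a

/-- The left counit evaluation map `(εₐ ⊗ id)` composed with `lid`. -/
noncomputable def Lmap {k X : Type} [CommRing k] :
    RBF k X ⊗[k] RBF k X →ₗ[k] RBF k X :=
  (TensorProduct.lid k (RBF k X)).toLinearMap ∘ₗ LinearMap.rTensor (RBF k X) RBF.eps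

/-- The right counit evaluation map `(id ⊗ εₐ)` composed with `rid`. -/
noncomputable def Rmap {k X : Type} [CommRing k] :
    RBF k X ⊗[k] RBF k X →ₗ[k] RBF k X :=
  (TensorProduct.rid k (RBF k X)).toLinearMap ∘ₗ LinearMap.lTensor (RBF k X) RBF.eps

lemma Lmap_tmul (a b : RBF k X) : Lmap (a ⊗ₜ[k] b) = RBF.eps a • b := by
  simp [Lmap]

lemma Rmap_tmul (a b : RBF k X) : Rmap (a ⊗ₜ[k] b) = RBF.eps b • a := by
  simp [Rmap]

lemma Lmap_lTensor_Bplus (t : RBF k X ⊗[k] RBF k X) :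
    Lmap (LinearMap.lTensor (RBF k X) RBF.Bplus t) = RBF.Bplus (Lmap t) := by
  have : (Lmap ∘ₗ LinearMap.lTensor (RBF k X) RBF.Bplus : RBF k X ⊗[k] RBF k X →ₗ[k] RBF k X)
      = RBF.Bplus ∘ₗ Lmap := by
    apply TensorProduct.ext'
    intro a b
    simp [Lmap_tmul]
  exact congrFun (congrArg DFunLike.coe this) t

lemma Rmap_lTensor_Bplus (t : RBF k X ⊗[k] RBF k X) :
    Rmap (LinearMap.lTensor (RBF k X) RBF.Bplus t) = 0 := by
  have : (Rmap ∘ₗ LinearMap.lTensor (RBF k X) RBF.Bplus : RBF k X ⊗[k] RBF k X →ₗ[k] RBF k X)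
      = 0 := by
    apply TensorProduct.ext'
    intro a b
    simp [Rmap_tmul, eps_Bplus]
  exact congrFun (congrArg DFunLike.coe this) t

lemma mixMap_tmul (f g : RBF k X →ₗ[k] RBF k X →ₗ[k] RBF k X) (a b c d : RBF k X) :
    mixMap f g (a ⊗ₜ[k] b) (c ⊗ₜ[k] d) = f a c ⊗ₜ[k] g b d := by
  simp [mixMap]

lemma Lmap_mixMap_concat (x : X) (lam : k) (u v : RBF k X ⊗[k] RBF k X) :
    Lmap (mixMap (RBF.concat x) (RBF.mul lam) u v) = 0 := by
  induction u using TensorProduct.induction_on with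
  | zero => simp
  | add s t hs ht => simp [map_add, hs, ht]
  | tmul a b =>
    induction v using TensorProduct.induction_on with
    | zero => simp
    | add s t hs ht => simp [map_add, hs, ht]
    | tmul c d => rw [mixMap_tmul, Lmap_tmul, eps_concat, zero_smul]

lemma Rmap_mixMap_concat (x : X) (lam : k) (u v : RBF k X ⊗[k] RBF k X) :
    Rmap (mixMap (RBF.mul lam) (RBF.concat x) u v) = 0 := by
  induction u using TensorProduct.induction_on with
  | zero => simp
  | add s t hs ht => simp [map_add, hs, ht]
  | tmul a b =>
    induction v using TensorProduct.induction_on with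
    | zero => simp
    | add s t hs ht => simp [map_add, hs, ht]
    | tmul c d => rw [mixMap_tmul, Rmap_tmul, eps_concat, zero_smul]

lemma Lmap_mixMap_mul (x : X) (lam : k) (u v : RBF k X ⊗[k] RBF k X) :
    Lmap (mixMap (RBF.mul lam) (RBF.concat x) u v)
      = RBF.concat x (Lmap u) (Lmap v) := by
  induction u using TensorProduct.induction_on with
  | zero => simp
  | add s t hs ht => simp [map_add, hs, ht]
  | tmul a b =>
    induction v using TensorProduct.induction_on with
    | zero => simp
    | add s t hs ht => simp [map_add, hs, ht]
    | tmul c d =>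
      rw [mixMap_tmul, Lmap_tmul, Lmap_tmul, Lmap_tmul, eps_mul]
      simp [mul_smul, smul_comm (RBF.eps c)]

lemma Rmap_mixMap_mul (x : X) (lam : k) (u v : RBF k X ⊗[k] RBF k X) :
    Rmap (mixMap (RBF.concat x) (RBF.mul lam) u v)
      = RBF.concat x (Rmap u) (Rmap v) := by
  induction u using TensorProduct.induction_on with
  | zero => simp
  | add s t hs ht => simp [map_add, hs, ht]
  | tmul a b =>
    induction v using TensorProduct.induction_on with
    | zero => simp
    | add s t hs ht => simp [map_add, hs, ht]
    | tmul c d =>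
      rw [mixMap_tmul, Rmap_tmul, Rmap_tmul, Rmap_tmul, eps_mul]
      simp [mul_smul, smul_comm (RBF.eps b)]

lemma concat_of (x : X) (F F' : AForest X) :
    RBF.concat x (RBF.of F : RBF k X) (RBF.of F') = RBF.of (concatA x F F') := by
  simp [RBF.concat, RBF.of, Finsupp.lift_apply, Finsupp.sum_single_index]

lemma Bplus_of (F : AForest X) :
    RBF.Bplus (RBF.of F : RBF k X) = RBF.of (AForest.single (ATree.graft F)) := by
  simp [RBF.Bplus, RBF.of, Finsupp.mapDomain_single]

mutual
  theorem counit_coT (lam : k) (T : ATree X) :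
      Lmap (coT lam T) = RBF.of (AForest.single T)
        ∧ Rmap (coT lam T) = RBF.of (AForest.single T) := by
    cases T with
    | leaf =>
      constructor <;>
        simp [coT, Lmap_tmul, Rmap_tmul, RBF.one, RBF.of, eps_single, epsW]
    | graft F =>
      have h := counit_coF lam F
      constructor
      · rw [coT, map_add, Lmap_tmul, Lmap_lTensor_Bplus, h.1, Bplus_of, eps_of]
        simp [epsW]
      · rw [coT, map_add, Rmap_tmul, Rmap_lTensor_Bplus, eps_one, one_smul, add_zero]
  theorem counit_coF (lam : k) (F : AForest X) :
      Lmap (coF lam F) = RBF.of F ∧ Rmap (coF lam F) = RBF.of F := by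
    cases F with
    | single T => rw [coF]; exact counit_coT lam T
    | cons T x G =>
      have hT := counit_coT lam T
      have hG := counit_coF lam G
      constructor
      · rw [coF, map_add, Lmap_mixMap_concat, Lmap_mixMap_mul, hT.1, hG.1, concat_of,
          zero_add]
        rfl
      · rw [coF, map_add, Rmap_mixMap_concat, Rmap_mixMap_mul, hT.2, hG.2, concat_of,
          add_zero]
        rfl
end

end Aux

/-- The linear map `εₐ : kF_X^a → k` sending `•` to `1` and every
other forest to `0` is a counit for the angular coproduct:
`(εₐ ⊗ id) ∘ Δₐ = id = (id ⊗ εₐ) ∘ Δₐ` under the canonical identifications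
`k ⊗ kF_X^a ≅ kF_X^a ≅ kF_X^a ⊗ k`. -/
theorem angular_counit (k X : Type) [CommRing k] (lam : k) (a : RBF k X) :
    (TensorProduct.lid k (RBF k X))
        ((LinearMap.rTensor (RBF k X) RBF.eps) (RBF.Delta lam a)) = a
    ∧ (TensorProduct.rid k (RBF k X))
        ((LinearMap.lTensor (RBF k X) RBF.eps) (RBF.Delta lam a)) = a := by
  have hL : ∀ b : RBF k X, Lmap (RBF.Delta lam b) = b := by
    intro b
    induction b using Finsupp.induction_linear with
    | zero => simp
    | add f g hf hg => simp only [map_add, hf, hg]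
    | single F c =>
      have hD : RBF.Delta lam (Finsupp.single F c) = c • coF lam F := by
        simp [RBF.Delta, Finsupp.lift_apply, Finsupp.sum_single_index]
      rw [hD, map_smul, (counit_coF lam F).1]
      simp [RBF.of, Finsupp.smul_single]
  have hR : ∀ b : RBF k X, Rmap (RBF.Delta lam b) = b := by
    intro b
    induction b using Finsupp.induction_linear with
    | zero => simp
    | add f g hf hg => simp only [map_add, hf, hg]
    | single F c =>
      have hD : RBF.Delta lam (Finsupp.single F c) = c • coF lam F := by
        simp [RBF.Delta, Finsupp.lift_apply, Finsupp.sum_single_index]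
      rw [hD, map_smul, (counit_coF lam F).2]
      simp [RBF.of, Finsupp.smul_single]
  exact ⟨hL a, hR a⟩
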